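/- Let ρ be a left-continuous convex modular on a real vector space X. The following are equivalent: (a) ρ satisfies the Δ₂-property; (b) for every sequence (x_n) ⊆ X_ρ and x ∈ X_ρ, ρ(x_n − x) → 0 if and only if ‖x_n − x‖_ρ → 0; (c) a set A ⊆ X_ρ is τ_ρ-open if and only if it is open with respect to the Luxemburg norm ‖·‖_ρ. -/

import Mathlib

open Filter Topology ENNReal

/-- A convex modular on a real vector space `X`. -/
structure IsConvexModular {X : Type*} [AddCommGroup X] [Module ℝ X] (ρ : X → ℝ≥0∞) : Prop where
  zero_iff : ∀ u : X, ρ u = 0 ↔ u = 0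
  neg_eq : ∀ u : X, ρ (-u) = ρ u
  convex : ∀ α : ℝ, 0 ≤ α → α ≤ 1 → ∀ u v : X,
    ρ (α • u + (1 - α) • v) ≤ ENNReal.ofReal α * ρ u + ENNReal.ofReal (1 - α) * ρ v

/-- `X_ρ`, the modular vector space associated to `ρ`. -/
def modularSet {X : Type*} [AddCommGroup X] [Module ℝ X] (ρ : X → ℝ≥0∞) : Set X :=
  {v : X | ∃ l : ℝ, 0 < l ∧ ρ (l • v) < ⊤}

/-- A set `A ⊆ X_ρ` is `τ_ρ`-open if every point of `A` contains a modular ball around it. -/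
def IsTauRhoOpen {X : Type*} [AddCommGroup X] [Module ℝ X] (ρ : X → ℝ≥0∞) (A : Set X) : Prop :=
  A ⊆ modularSet ρ ∧
    ∀ x ∈ A, ∃ ε : ℝ, 0 < ε ∧ {y ∈ modularSet ρ | ρ (y - x) < ENNReal.ofReal ε} ⊆ A

/-- `ρ` is left-continuous. -/
def IsLeftContinuousModular {X : Type*} [AddCommGroup X] [Module ℝ X] (ρ : X → ℝ≥0∞) : Prop :=
  ∀ (u : X) (l₀ : ℝ), 0 < l₀ →
    Tendsto (fun l : ℝ => ρ (l • u)) (nhdsWithin l₀ (Set.Iio l₀)) (nhds (ρ (l₀ • u)))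

/-- The Luxemburg norm `‖x‖_ρ := inf {λ > 0 : ρ(x/λ) ≤ 1}`. -/
noncomputable def luxNorm {X : Type*} [AddCommGroup X] [Module ℝ X] (ρ : X → ℝ≥0∞) (x : X) : ℝ :=
  sInf {l : ℝ | 0 < l ∧ ρ (l⁻¹ • x) ≤ 1}

/-- The `Δ₂`-property of a modular. -/
def Delta2 {X : Type*} [AddCommGroup X] [Module ℝ X] (ρ : X → ℝ≥0∞) : Prop :=
  ∀ x : ℕ → X, Tendsto (fun j => ρ (x j)) atTop (nhds 0) →
    Tendsto (fun j => ρ ((2 : ℝ) • x j)) atTop (nhds 0)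

section AuxLemmas
variable {X : Type*} [AddCommGroup X] [Module ℝ X] (ρ : X → ℝ≥0∞)

lemma rho_zero (hρ : IsConvexModular ρ) : ρ 0 = 0 := (hρ.zero_iff 0).2 rfl

lemma rho_smul_le (hρ : IsConvexModular ρ) {s : ℝ} (h0 : 0 ≤ s) (h1 : s ≤ 1)
    (u : X) : ρ (s • u) ≤ ENNReal.ofReal s * ρ u := by
  have h := hρ.convex s h0 h1 u 0
  simpa [rho_zero ρ hρ] using h

lemma luxNorm_nonneg (x : X) : 0 ≤ luxNorm ρ x :=
  Real.sInf_nonneg (fun l hl => hl.1.le)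

lemma luxNorm_le {x : X} {c : ℝ} (hc : 0 < c) (h : ρ (c⁻¹ • x) ≤ 1) : luxNorm ρ x ≤ c :=
  csInf_le ⟨0, fun l hl => hl.1.le⟩ ⟨hc, h⟩

lemma normSet_nonempty (hρ : IsConvexModular ρ) {x : X} (hx : x ∈ modularSet ρ) :
    {l : ℝ | 0 < l ∧ ρ (l⁻¹ • x) ≤ 1}.Nonempty := by
  obtain ⟨l, hl, hfin⟩ := hx
  by_cases hC : ρ (l • x) ≤ 1
  · exact ⟨l⁻¹, inv_pos.2 hl, by rwa [inv_inv]⟩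
  · push_neg at hC
    have hC0 : ρ (l • x) ≠ 0 := by
      intro h; rw [h] at hC; exact (not_lt.2 zero_le) hC
    have hCtop : ρ (l • x) ≠ ⊤ := hfin.ne
    have hpos : 0 < (ρ (l • x)).toReal := ENNReal.toReal_pos hC0 hCtop
    set t : ℝ := ((ρ (l • x)).toReal)⁻¹ with ht
    have ht0 : 0 < t := inv_pos.2 hpos
    have htc : t * (ρ (l • x)).toReal = 1 := inv_mul_cancel₀ (ne_of_gt hpos)
    have h1C : 1 ≤ (ρ (l • x)).toReal := by
      have := ENNReal.toReal_mono hCtop hC.le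
      simpa using this
    have ht1 : t ≤ 1 := by nlinarith
    refine ⟨(t * l)⁻¹, inv_pos.2 (mul_pos ht0 hl), ?_⟩
    rw [inv_inv]
    have hms : (t * l) • x = t • (l • x) := by rw [mul_smul]
    rw [hms]
    calc ρ (t • (l • x)) ≤ ENNReal.ofReal t * ρ (l • x) := rho_smul_le ρ hρ ht0.le ht1 _
      _ = (ENNReal.ofReal (ρ (l • x)).toReal)⁻¹ * ρ (l • x) := by
          rw [ht, ENNReal.ofReal_inv_of_pos hpos]
      _ = (ρ (l • x))⁻¹ * ρ (l • x) := by rw [ENNReal.ofReal_toReal hCtop]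
      _ = 1 := ENNReal.inv_mul_cancel hC0 hCtop

lemma rho_smul_le_of_lux_lt (hρ : IsConvexModular ρ) {x : X} (hx : x ∈ modularSet ρ)
    {c r : ℝ} (hc : 0 < c) (hr : luxNorm ρ x < r) (hcr : c * r ≤ 1) :
    ρ (c • x) ≤ ENNReal.ofReal (c * r) := by
  have hr' : sInf {l : ℝ | 0 < l ∧ ρ (l⁻¹ • x) ≤ 1} < r := hr
  obtain ⟨μ, hμmem, hμr⟩ := exists_lt_of_csInf_lt (normSet_nonempty ρ hρ hx) hr'
  obtain ⟨hμ0, hμρ⟩ := hμmem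
  have hcμ : 0 < c * μ := mul_pos hc hμ0
  have hcμ1 : c * μ ≤ 1 := le_trans (by nlinarith) hcr
  have key : c • x = (c * μ) • (μ⁻¹ • x) := by
    rw [smul_smul, mul_assoc, mul_inv_cancel₀ (ne_of_gt hμ0), mul_one]
  rw [key]
  calc ρ ((c * μ) • (μ⁻¹ • x)) ≤ ENNReal.ofReal (c * μ) * ρ (μ⁻¹ • x) :=
        rho_smul_le ρ hρ hcμ.le hcμ1 _
    _ ≤ ENNReal.ofReal (c * μ) * 1 := by gcongr
    _ = ENNReal.ofReal (c * μ) := mul_one _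
    _ ≤ ENNReal.ofReal (c * r) := ENNReal.ofReal_le_ofReal (by nlinarith)

lemma mem_modularSet_of_lt_top {x : X} (h : ρ x < ⊤) : x ∈ modularSet ρ :=
  ⟨1, one_pos, by simpa using h⟩

lemma zero_mem_modularSet (hρ : IsConvexModular ρ) : (0 : X) ∈ modularSet ρ :=
  ⟨1, one_pos, by simp [rho_zero ρ hρ]⟩

lemma luxNorm_zero (hρ : IsConvexModular ρ) : luxNorm ρ (0 : X) = 0 := by
  have hset : {l : ℝ | 0 < l ∧ ρ (l⁻¹ • (0 : X)) ≤ 1} = Set.Ioi 0 := by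
    ext l
    simp [rho_zero ρ hρ]
  unfold luxNorm
  rw [hset]
  exact csInf_Ioi

lemma sub_mem_modularSet (hρ : IsConvexModular ρ) {x y : X}
    (hx : x ∈ modularSet ρ) (hy : y ∈ modularSet ρ) : x - y ∈ modularSet ρ := by
  obtain ⟨a, ha, hax⟩ := hx
  obtain ⟨b, hb, hby⟩ := hy
  set l : ℝ := min a b / 2 with hl
  have hl0 : 0 < l := by positivity
  refine ⟨l, hl0, ?_⟩
  have key : ∀ (c : ℝ) (u : X), 0 < c → 2 * l ≤ c → ρ (c • u) < ⊤ → ρ ((2 * l) • u) < ⊤ := by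
    intro c u hc hle hfin
    have hd : (2 * l) • u = ((2 * l) / c) • (c • u) := by
      rw [smul_smul, div_mul_cancel₀ _ (ne_of_gt hc)]
    rw [hd]
    calc ρ (((2 * l) / c) • (c • u)) ≤ ENNReal.ofReal ((2 * l) / c) * ρ (c • u) :=
          rho_smul_le ρ hρ (by positivity) (by rw [div_le_one hc]; exact hle) _
      _ < ⊤ := ENNReal.mul_lt_top ENNReal.ofReal_lt_top hfin
  have h2la : 2 * l ≤ a := by
    have := min_le_left a b; rw [hl]; linarith
  have h2lb : 2 * l ≤ b := by
    have := min_le_right a b; rw [hl]; linarith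
  have kx := key a x ha h2la hax
  have ky := key b y hb h2lb hby
  have hdecomp : l • (x - y) = (1/2 : ℝ) • ((2 * l) • x) + (1 - 1/2 : ℝ) • (-((2 * l) • y)) := by
    module
  rw [hdecomp]
  calc ρ ((1/2 : ℝ) • ((2 * l) • x) + (1 - 1/2 : ℝ) • (-((2 * l) • y)))
      ≤ ENNReal.ofReal (1/2) * ρ ((2 * l) • x) + ENNReal.ofReal (1 - 1/2) * ρ (-((2 * l) • y)) :=
        hρ.convex (1/2) (by norm_num) (by norm_num) _ _
    _ = ENNReal.ofReal (1/2) * ρ ((2 * l) • x) + ENNReal.ofReal (1 - 1/2) * ρ ((2 * l) • y) := by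
        rw [hρ.neg_eq]
    _ < ⊤ := ENNReal.add_lt_top.2 ⟨ENNReal.mul_lt_top ENNReal.ofReal_lt_top kx,
        ENNReal.mul_lt_top ENNReal.ofReal_lt_top ky⟩

lemma luxNorm_add_le (hρ : IsConvexModular ρ) {x y : X}
    (hx : x ∈ modularSet ρ) (hy : y ∈ modularSet ρ) :
    luxNorm ρ (x + y) ≤ luxNorm ρ x + luxNorm ρ y := by
  have nex := normSet_nonempty ρ hρ hx
  have ney := normSet_nonempty ρ hρ hy
  have key : ∀ a ∈ {l : ℝ | 0 < l ∧ ρ (l⁻¹ • x) ≤ 1}, ∀ b ∈ {l : ℝ | 0 < l ∧ ρ (l⁻¹ • y) ≤ 1},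
      luxNorm ρ (x + y) ≤ a + b := by
    rintro a ⟨ha0, haρ⟩ b ⟨hb0, hbρ⟩
    have hab : 0 < a + b := by linarith
    apply luxNorm_le ρ hab
    have hα0 : 0 ≤ a / (a + b) := by positivity
    have hα1 : a / (a + b) ≤ 1 := by rw [div_le_one hab]; linarith
    have h1α : (1 : ℝ) - a / (a + b) = b / (a + b) := by field_simp; ring
    have hdecomp : (a + b)⁻¹ • (x + y)
        = (a / (a + b)) • (a⁻¹ • x) + (1 - a / (a + b)) • (b⁻¹ • y) := by
      rw [h1α, smul_smul, smul_smul, smul_add]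
      congr 1
      · congr 1
        field_simp
      · congr 1
        field_simp
    rw [hdecomp]
    calc ρ ((a / (a + b)) • (a⁻¹ • x) + (1 - a / (a + b)) • (b⁻¹ • y))
        ≤ ENNReal.ofReal (a / (a + b)) * ρ (a⁻¹ • x)
          + ENNReal.ofReal (1 - a / (a + b)) * ρ (b⁻¹ • y) := hρ.convex _ hα0 hα1 _ _
      _ ≤ ENNReal.ofReal (a / (a + b)) * 1 + ENNReal.ofReal (1 - a / (a + b)) * 1 :=
          add_le_add (by gcongr) (by gcongr)
      _ = ENNReal.ofReal (a / (a + b)) + ENNReal.ofReal (1 - a / (a + b)) := by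
          rw [mul_one, mul_one]
      _ = ENNReal.ofReal ((a / (a + b)) + (1 - a / (a + b))) := by
          rw [ENNReal.ofReal_add hα0 (by linarith)]
      _ = 1 := by norm_num
  have h1 : ∀ a ∈ {l : ℝ | 0 < l ∧ ρ (l⁻¹ • x) ≤ 1}, luxNorm ρ (x + y) - a ≤ luxNorm ρ y := by
    intro a ha
    have : luxNorm ρ y = sInf {l : ℝ | 0 < l ∧ ρ (l⁻¹ • y) ≤ 1} := rfl
    rw [this]
    apply le_csInf ney
    intro b hb
    have := key a ha b hb
    linarith
  have h2 : luxNorm ρ (x + y) - luxNorm ρ y ≤ luxNorm ρ x := by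
    have hdef : luxNorm ρ x = sInf {l : ℝ | 0 < l ∧ ρ (l⁻¹ • x) ≤ 1} := rfl
    rw [hdef]
    apply le_csInf nex
    intro a ha
    have := h1 a ha
    linarith
  linarith


lemma tendsto_lux_of_tendsto_rho (hρ : IsConvexModular ρ) (hd : Delta2 ρ) (z : ℕ → X)
    (h : Tendsto (fun n => ρ (z n)) atTop (nhds 0)) :
    Tendsto (fun n => luxNorm ρ (z n)) atTop (nhds 0) := by
  have hk : ∀ k : ℕ, Tendsto (fun n => ρ ((2 : ℝ) ^ k • z n)) atTop (nhds 0) := by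
    intro k
    induction k with
    | zero => simpa using h
    | succ k ih =>
      have h2 := hd (fun n => (2 : ℝ) ^ k • z n) ih
      have heq : ∀ n, (2 : ℝ) ^ (k + 1) • z n = (2 : ℝ) • ((2 : ℝ) ^ k • z n) := by
        intro n
        rw [smul_smul, ← pow_succ']
      simp only [heq]
      exact h2
  rw [Metric.tendsto_atTop]
  intro ε hε
  obtain ⟨k, hk2⟩ : ∃ k : ℕ, (1/2 : ℝ) ^ k < ε := exists_pow_lt_of_lt_one hε (by norm_num)
  have hev : ∀ᶠ n in atTop, ρ ((2 : ℝ) ^ k • z n) < 1 :=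
    (hk k).eventually_lt_const (by norm_num)
  obtain ⟨N, hN⟩ := hev.exists_forall_of_atTop
  refine ⟨N, fun n hn => ?_⟩
  have hle : luxNorm ρ (z n) ≤ (1/2 : ℝ) ^ k := by
    apply luxNorm_le ρ (by positivity)
    have : ((1/2 : ℝ) ^ k)⁻¹ = (2 : ℝ) ^ k := by
      rw [one_div, inv_pow, inv_inv]
    rw [this]
    exact (hN n hn).le
  rw [Real.dist_eq, sub_zero, abs_of_nonneg (luxNorm_nonneg ρ _)]
  exact lt_of_le_of_lt hle hk2

lemma tendsto_rho_smul_of_tendsto_lux (hρ : IsConvexModular ρ) {c : ℝ} (hc : 0 < c)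
    (z : ℕ → X) (hmem : ∀ n, z n ∈ modularSet ρ)
    (h : Tendsto (fun n => luxNorm ρ (z n)) atTop (nhds 0)) :
    Tendsto (fun n => ρ (c • z n)) atTop (nhds 0) := by
  rw [ENNReal.tendsto_nhds_zero]
  intro ε hε
  set δ : ℝ := (min ε 1).toReal with hδdef
  have hmintop : min ε 1 ≠ ⊤ := (lt_of_le_of_lt (min_le_right _ _) ENNReal.one_lt_top).ne
  have hδ0 : 0 < δ := ENNReal.toReal_pos (lt_min hε zero_lt_one).ne' hmintop
  have hδ1 : δ ≤ 1 := by
    have := ENNReal.toReal_mono ENNReal.one_ne_top (min_le_right ε 1)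
    simpa using this
  have hδle : ENNReal.ofReal δ ≤ ε := by
    rw [hδdef, ENNReal.ofReal_toReal hmintop]
    exact min_le_left _ _
  filter_upwards [h.eventually_lt_const (div_pos hδ0 hc)] with n hn
  have hb := rho_smul_le_of_lux_lt ρ hρ (hmem n) hc hn
    (by rw [mul_comm, div_mul_cancel₀ _ (ne_of_gt hc)]; exact hδ1)
  calc ρ (c • z n) ≤ ENNReal.ofReal (c * (δ / c)) := hb
    _ = ENNReal.ofReal δ := by rw [mul_comm, div_mul_cancel₀ _ (ne_of_gt hc)]
    _ ≤ ε := hδle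

lemma tendsto_rho_of_tendsto_lux (hρ : IsConvexModular ρ)
    (z : ℕ → X) (hmem : ∀ n, z n ∈ modularSet ρ)
    (h : Tendsto (fun n => luxNorm ρ (z n)) atTop (nhds 0)) :
    Tendsto (fun n => ρ (z n)) atTop (nhds 0) := by
  have := tendsto_rho_smul_of_tendsto_lux ρ hρ one_pos z hmem h
  simpa using this

lemma delta2_uniform (hρ : IsConvexModular ρ) (hd : Delta2 ρ) {r : ℝ} (hr : 0 < r) :
    ∃ ε : ℝ, 0 < ε ∧ ∀ z : X, ρ z < ENNReal.ofReal ε → luxNorm ρ z < r := by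
  by_contra hcon
  push_neg at hcon
  have hch : ∀ n : ℕ, ∃ z : X, ρ z < ENNReal.ofReal (1 / (n + 1)) ∧ r ≤ luxNorm ρ z := by
    intro n
    obtain ⟨z, hz1, hz2⟩ := hcon (1 / (n + 1)) (by positivity)
    exact ⟨z, hz1, hz2⟩
  choose z hz1 hz2 using hch
  have htend : Tendsto (fun n => ρ (z n)) atTop (nhds 0) := by
    have hup : Tendsto (fun n : ℕ => ENNReal.ofReal (1 / (n + 1 : ℝ))) atTop (nhds 0) := by
      have h0 : Tendsto (fun n : ℕ => 1 / (n + 1 : ℝ)) atTop (nhds 0) :=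
        tendsto_one_div_add_atTop_nhds_zero_nat
      have := ENNReal.tendsto_ofReal h0
      simpa using this
    exact tendsto_of_tendsto_of_tendsto_of_le_of_le tendsto_const_nhds hup
      (fun n => zero_le) (fun n => (hz1 n).le)
  have hlux := tendsto_lux_of_tendsto_rho ρ hρ hd z htend
  rw [Metric.tendsto_atTop] at hlux
  obtain ⟨N, hN⟩ := hlux r hr
  have := hN N le_rfl
  rw [Real.dist_eq, sub_zero, abs_of_nonneg (luxNorm_nonneg ρ _)] at this
  exact absurd (hz2 N) (not_le.2 this)


end AuxLemmas

/-- The `Δ₂`-property is equivalent to: (b) `ρ`-convergence coincides with Luxemburg-norm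
convergence on `X_ρ`; and to (c) the modular topology `τ_ρ` coincides with the Luxemburg
norm topology on `X_ρ`. -/
theorem delta2_iff_rho_eq_norm_convergence_iff_topologies_agree
    {X : Type*} [AddCommGroup X] [Module ℝ X]
    (ρ : X → ℝ≥0∞) (hρ : IsConvexModular ρ) (hlc : IsLeftContinuousModular ρ) :
    (Delta2 ρ ↔
      ∀ x : ℕ → X, (∀ n, x n ∈ modularSet ρ) → ∀ y ∈ modularSet ρ,
        (Tendsto (fun n => ρ (x n - y)) atTop (nhds 0) ↔
          Tendsto (fun n => luxNorm ρ (x n - y)) atTop (nhds 0))) ∧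
    (Delta2 ρ ↔
      ∀ A : Set X, A ⊆ modularSet ρ →
        (IsTauRhoOpen ρ A ↔
          ∀ x ∈ A, ∃ r : ℝ, 0 < r ∧ {y ∈ modularSet ρ | luxNorm ρ (y - x) < r} ⊆ A)) := by
    -- (a) → (b)
  have hBofD : Delta2 ρ →
      ∀ x : ℕ → X, (∀ n, x n ∈ modularSet ρ) → ∀ y ∈ modularSet ρ,
        (Tendsto (fun n => ρ (x n - y)) atTop (nhds 0) ↔
          Tendsto (fun n => luxNorm ρ (x n - y)) atTop (nhds 0)) := by
    intro hd x hx y hy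
    constructor
    · intro h
      exact tendsto_lux_of_tendsto_rho ρ hρ hd _ h
    · intro h
      exact tendsto_rho_of_tendsto_lux ρ hρ _
        (fun n => sub_mem_modularSet ρ hρ (hx n) hy) h
  -- (b) → (a)
  have hDofB : (∀ x : ℕ → X, (∀ n, x n ∈ modularSet ρ) → ∀ y ∈ modularSet ρ,
        (Tendsto (fun n => ρ (x n - y)) atTop (nhds 0) ↔
          Tendsto (fun n => luxNorm ρ (x n - y)) atTop (nhds 0))) → Delta2 ρ := by
    intro hb x hx0
    classical
    set x' : ℕ → X := fun j => if ρ (x j) < ⊤ then x j else 0 with hx'def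
    have hmem : ∀ j, x' j ∈ modularSet ρ := by
      intro j
      simp only [hx'def]
      split_ifs with h
      · exact mem_modularSet_of_lt_top ρ h
      · exact zero_mem_modularSet ρ hρ
    have heq : ∀ᶠ j in atTop, x' j = x j := by
      have hev : ∀ᶠ j in atTop, ρ (x j) < ⊤ :=
        hx0.eventually_lt_const (by simp)
      filter_upwards [hev] with j hj
      simp only [hx'def, if_pos hj]
    have hρ' : Tendsto (fun j => ρ (x' j)) atTop (nhds 0) :=
      hx0.congr' (heq.mono fun j hj => (congrArg ρ hj).symm)
    have hbi := hb x' hmem 0 (zero_mem_modularSet ρ hρ)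
    simp only [sub_zero] at hbi
    have hlux : Tendsto (fun j => luxNorm ρ (x' j)) atTop (nhds 0) := hbi.1 hρ'
    have h2 : Tendsto (fun j => ρ ((2 : ℝ) • x' j)) atTop (nhds 0) :=
      tendsto_rho_smul_of_tendsto_lux ρ hρ two_pos x' hmem hlux
    exact h2.congr' (heq.mono fun j hj => by rw [hj])
  -- (a) → (c)
  have hCofD : Delta2 ρ →
      ∀ A : Set X, A ⊆ modularSet ρ →
        (IsTauRhoOpen ρ A ↔
          ∀ x ∈ A, ∃ r : ℝ, 0 < r ∧ {y ∈ modularSet ρ | luxNorm ρ (y - x) < r} ⊆ A) := by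
    intro hd A hA
    constructor
    · rintro ⟨-, hopen⟩ x hxA
      obtain ⟨ε, hε, hball⟩ := hopen x hxA
      refine ⟨min ε 1 / 2, by positivity, ?_⟩
      rintro y ⟨hymem, hynorm⟩
      apply hball
      refine ⟨hymem, ?_⟩
      have hsub := sub_mem_modularSet ρ hρ hymem (hA hxA)
      have hb := rho_smul_le_of_lux_lt ρ hρ hsub one_pos hynorm
        (by rw [one_mul]; have := min_le_right ε (1 : ℝ); linarith)
      have hmlt : min ε 1 / 2 < ε := by
        have h1 : min ε 1 ≤ ε := min_le_left _ _
        have h2 : 0 < min ε 1 := lt_min hε one_pos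
        linarith
      calc ρ (y - x) = ρ ((1 : ℝ) • (y - x)) := by rw [one_smul]
        _ ≤ ENNReal.ofReal (1 * (min ε 1 / 2)) := hb
        _ < ENNReal.ofReal ε := by
            rw [one_mul]
            exact (ENNReal.ofReal_lt_ofReal_iff hε).2 hmlt
    · intro hnorm
      refine ⟨hA, ?_⟩
      intro x hxA
      obtain ⟨r, hr, hball⟩ := hnorm x hxA
      obtain ⟨ε, hε, hkey⟩ := delta2_uniform ρ hρ hd hr
      refine ⟨ε, hε, ?_⟩
      rintro y ⟨hymem, hyρ⟩
      exact hball ⟨hymem, hkey _ hyρ⟩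
  -- (c) → (a)
  have hDofC : (∀ A : Set X, A ⊆ modularSet ρ →
        (IsTauRhoOpen ρ A ↔
          ∀ x ∈ A, ∃ r : ℝ, 0 < r ∧ {y ∈ modularSet ρ | luxNorm ρ (y - x) < r} ⊆ A))
      → Delta2 ρ := by
    intro hc x hx0
    by_contra hcon
    obtain ⟨ε, hε, hfreq⟩ : ∃ ε : ℝ≥0∞, 0 < ε ∧ ∃ᶠ j in atTop, ε < ρ ((2 : ℝ) • x j) := by
      by_contra hall
      push_neg at hall
      apply hcon
      rw [ENNReal.tendsto_nhds_zero]
      intro ε hε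
      have h1 := hall ε hε
      filter_upwards [h1] with j hj
      exact hj
    set δ : ℝ := (min ε 1).toReal with hδdef
    have hmintop : min ε 1 ≠ ⊤ := (lt_of_le_of_lt (min_le_right _ _) ENNReal.one_lt_top).ne
    have hδ0 : 0 < δ := ENNReal.toReal_pos (lt_min hε zero_lt_one).ne' hmintop
    have hofδ : ENNReal.ofReal δ ≤ ε := by
      rw [hδdef, ENNReal.ofReal_toReal hmintop]; exact min_le_left _ _
    have hfreq' : ∃ᶠ j in atTop, ENNReal.ofReal δ < ρ ((2 : ℝ) • x j) :=
      hfreq.mono fun j hj => lt_of_le_of_lt hofδ hj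
    set r₀ : ℝ := min δ 1 / 2 with hr₀def
    have hr₀ : 0 < r₀ := by positivity
    have hlb : ∀ j, x j ∈ modularSet ρ → ENNReal.ofReal δ < ρ ((2 : ℝ) • x j) →
        r₀ ≤ luxNorm ρ (x j) := by
      intro j hmem hj
      by_contra hlt
      push_neg at hlt
      have hb := rho_smul_le_of_lux_lt ρ hρ hmem two_pos hlt
        (by rw [hr₀def]; have := min_le_right δ (1 : ℝ); linarith)
      have h2r : (2 : ℝ) * r₀ ≤ δ := by
        rw [hr₀def]; have := min_le_left δ (1 : ℝ); linarith
      have : ρ ((2 : ℝ) • x j) ≤ ENNReal.ofReal δ :=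
        le_trans hb (ENNReal.ofReal_le_ofReal h2r)
      exact absurd hj (not_lt.2 this)
    set A : Set X := {y ∈ modularSet ρ | luxNorm ρ y < r₀} with hAdef
    have hAsub : A ⊆ modularSet ρ := fun y hy => hy.1
    have hAnorm : ∀ p ∈ A, ∃ r : ℝ, 0 < r ∧
        {y ∈ modularSet ρ | luxNorm ρ (y - p) < r} ⊆ A := by
      rintro p ⟨hpmem, hpnorm⟩
      refine ⟨r₀ - luxNorm ρ p, by linarith, ?_⟩
      rintro y ⟨hymem, hynorm⟩
      refine ⟨hymem, ?_⟩
      have hyp : y - p + p = y := by abel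
      have htri : luxNorm ρ y ≤ luxNorm ρ (y - p) + luxNorm ρ p := by
        have := luxNorm_add_le ρ hρ (sub_mem_modularSet ρ hρ hymem hpmem) hpmem
        rwa [hyp] at this
      linarith
    have hAopen : IsTauRhoOpen ρ A := (hc A hAsub).2 hAnorm
    obtain ⟨-, hop⟩ := hAopen
    have h0A : (0 : X) ∈ A := ⟨zero_mem_modularSet ρ hρ, by rw [luxNorm_zero ρ hρ]; exact hr₀⟩
    obtain ⟨ε₂, hε₂, hball⟩ := hop 0 h0A
    have hev : ∀ᶠ j in atTop, ρ (x j) < ENNReal.ofReal ε₂ :=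
      hx0.eventually_lt_const (ENNReal.ofReal_pos.2 hε₂)
    obtain ⟨j, hj1, hj2⟩ := (hfreq'.and_eventually hev).exists
    have hmemj : x j ∈ modularSet ρ :=
      mem_modularSet_of_lt_top ρ (lt_of_lt_of_le hj2 le_top)
    have hjA : x j ∈ A := hball ⟨hmemj, by rwa [sub_zero]⟩
    exact absurd hjA.2 (not_lt.2 (hlb j hmemj hj1))
  exact ⟨⟨hBofD, hDofB⟩, ⟨hCofD, hDofC⟩⟩
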